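/- Let k be a field of characteristic zero, let u, v, α, β ∈ k with β³ = α and α ≠ 0, let (λ, μ) ∈ k² with (λ, μ) ≠ (0, 0), and let P ∈ k[x, y] be a homogeneous polynomial of degree 3 such that 27·α·P(λ, μ) + (uλ + vμ)³ = 0. Then the cubic form F = P(x, y) + z·t·(ux + vy) + z³ + α·t³ ∈ k[x, y, z, t] lies in the ideal generated by the two linear forms μx − λy and uβx + vβy − 3β²z − 3αt; moreover the point (x, y, z, t) = (0, 0, −β, 1) annihilates both linear forms and satisfies F(0, 0, −β, 1) = 0. (Geometrically: each of the three lines cut out by these linear forms as (λ : μ) runs over the roots of 27αP(λ,μ) + (uλ+vμ)³ = 0 lies on the cubic surface F = 0 and passes through the Eckardt point (0 : 0 : −β : 1).) -/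

import Mathlib

open MvPolynomial
set_option maxHeartbeats 2000000
set_option synthInstance.maxHeartbeats 400000

lemma aeval_mul_smul_of_isHomogeneous {σ R S : Type*} [Fintype σ] [CommSemiring R]
    [CommSemiring S] [Algebra R S] {n : ℕ} {P : MvPolynomial σ R} (hP : P.IsHomogeneous n)
    (r : S) (x : σ → R) :
    aeval (fun i => r * algebraMap R S (x i)) P = r ^ n * algebraMap R S (eval x P) := by
  rw [aeval_def, eval₂_eq', eval_eq', map_sum, Finset.mul_sum]
  refine Finset.sum_congr rfl fun d hd => ?_
  have hdeg : ∑ i, d i = n := by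
    have h1 := hP (mem_support_iff.mp hd)
    rw [Finsupp.weight_apply, Finsupp.sum_fintype] at h1
    · simpa using h1
    · intro i; simp
  simp only [mul_pow, Finset.prod_mul_distrib, Finset.prod_pow_eq_pow_sum, hdeg,
    map_mul, map_prod, map_pow]
  ring

/-- **(cf. Lemma 5.3 (X3Eckardt).)** Let `k` be a field of characteristic zero,
`u, v, α, β ∈ k` with `β³ = α ≠ 0`, let `(λ, μ) ≠ (0, 0)` in `k²`, and let `P ∈ k[x, y]` be
homogeneous of degree 3 with `27·α·P(λ, μ) + (uλ + vμ)³ = 0`. Then the cubic form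
`F = P(x, y) + zt(ux + vy) + z³ + αt³` lies in the ideal generated by the linear forms
`μx − λy` and `uβx + vβy − 3β²z − 3αt`; moreover the point `(0, 0, −β, 1)` annihilates both
linear forms and `F`. (Variables: `x = X 0`, `y = X 1`, `z = X 2`, `t = X 3`.) -/
theorem lines_through_eckardt_point_lie_on_cubic (k : Type*) [Field k] [CharZero k]
    (u v α β lam mu : k) (hβ : β ^ 3 = α) (hα : α ≠ 0) (hlm : (lam, mu) ≠ (0, 0))
    (P : MvPolynomial (Fin 2) k) (hP : P.IsHomogeneous 3)
    (hroot : 27 * α * (eval ![lam, mu] P) + (u * lam + v * mu) ^ 3 = 0) :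
    (rename (fun i : Fin 2 => (i.castLE (by norm_num) : Fin 4)) P +
        (X 2 : MvPolynomial (Fin 4) k) * X 3 * (C u * X 0 + C v * X 1) +
        X 2 ^ 3 + C α * X 3 ^ 3) ∈
      Ideal.span ({C mu * X 0 - C lam * X 1,
        C (u * β) * X 0 + C (v * β) * X 1 - C (3 * β ^ 2) * X 2 - C (3 * α) * X 3} :
        Set (MvPolynomial (Fin 4) k)) ∧
    eval ![0, 0, -β, 1] ((C mu * X 0 - C lam * X 1 : MvPolynomial (Fin 4) k)) = 0 ∧
    eval ![0, 0, -β, 1] ((C (u * β) * X 0 + C (v * β) * X 1 - C (3 * β ^ 2) * X 2 -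
        C (3 * α) * X 3 : MvPolynomial (Fin 4) k)) = 0 ∧
    eval ![0, 0, -β, 1] (rename (fun i : Fin 2 => (i.castLE (by norm_num) : Fin 4)) P +
        (X 2 : MvPolynomial (Fin 4) k) * X 3 * (C u * X 0 + C v * X 1) +
        X 2 ^ 3 + C α * X 3 ^ 3) = 0 := by
  have hβ0 : β ≠ 0 := by
    rintro rfl; exact hα (by rw [← hβ]; ring)
  have heval0 : eval (fun _ => (0:k)) P = 0 := by
    rw [eval_zero']
    exact hP.coeff_eq_zero (by simp)
  refine ⟨?_, by simp, ?_, ?_⟩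
  · -- ideal membership
    obtain ⟨a, b, hab⟩ : ∃ a b : k, a * lam + b * mu = 1 := by
      rcases eq_or_ne lam 0 with h | h
      · have hmu : mu ≠ 0 := fun hm => hlm (by rw [h, hm])
        exact ⟨0, mu⁻¹, by field_simp; ring⟩
      · exact ⟨lam⁻¹, 0, by field_simp; ring⟩
    set I : Ideal (MvPolynomial (Fin 4) k) := Ideal.span {C mu * X 0 - C lam * X 1,
        C (u * β) * X 0 + C (v * β) * X 1 - C (3 * β ^ 2) * X 2 - C (3 * α) * X 3} with hI
    rw [← Ideal.Quotient.eq_zero_iff_mem, ← Ideal.Quotient.mkₐ_eq_mk k I]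
    set q : MvPolynomial (Fin 4) k →ₐ[k] MvPolynomial (Fin 4) k ⧸ I := Ideal.Quotient.mkₐ k I
      with hq
    set c : k →+* MvPolynomial (Fin 4) k ⧸ I := algebraMap k _ with hc
    have hqC : ∀ r : k, q (C r) = c r := fun r => q.commutes r
    have hmem : ∀ p : MvPolynomial (Fin 4) k, p ∈ I → q p = 0 := fun p hp => by
      rw [hq, Ideal.Quotient.mkₐ_eq_mk, Ideal.Quotient.eq_zero_iff_mem]; exact hp
    have h1 : c mu * q (X 0) - c lam * q (X 1) = 0 := by
      rw [← hqC, ← hqC, ← map_mul, ← map_mul, ← map_sub]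
      exact hmem _ (Ideal.subset_span (Set.mem_insert _ _))
    have h2 : c (u * β) * q (X 0) + c (v * β) * q (X 1) - c (3 * β ^ 2) * q (X 2)
        - c (3 * α) * q (X 3) = 0 := by
      simp only [← hqC, ← map_mul, ← map_sub, ← map_add]
      exact hmem _ (Ideal.subset_span (Set.mem_insert_of_mem _ rfl))
    have cab : c a * c lam + c b * c mu = 1 := by
      rw [← map_mul, ← map_mul, ← map_add, hab, map_one]
    set S : MvPolynomial (Fin 4) k ⧸ I := c a * q (X 0) + c b * q (X 1) with hS
    have hx : q (X 0) = c lam * S := by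
      rw [hS]; linear_combination (c b) * h1 + (q (X 0)) * cab.symm
    have hy : q (X 1) = c mu * S := by
      rw [hS]; linear_combination (-(c a)) * h1 + (q (X 1)) * cab.symm
    have hren : q (rename (fun i : Fin 2 => (i.castLE (by norm_num) : Fin 4)) P)
        = S ^ 3 * c (eval ![lam, mu] P) := by
      have key : q.comp (rename (fun i : Fin 2 => (i.castLE (by norm_num) : Fin 4)))
          = aeval (fun i : Fin 2 => S * c (![lam, mu] i)) := by
        rw [aeval_unique (q.comp (rename _))]
        congr 1
        funext i
        fin_cases i
        · simpa using hx.trans (mul_comm _ _)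
        · simpa using hy.trans (mul_comm _ _)
      have := congrFun (congrArg (fun f => f.toFun) key) P
      simp only [AlgHom.toFun_eq_coe, AlgHom.comp_apply] at this
      rw [this]
      exact aeval_mul_smul_of_isHomogeneous hP S ![lam, mu]
    simp only [map_add, map_mul, map_pow, hqC, hren, hx, hy]
    -- now a computation in the quotient ring
    have chβ : c β ^ 3 = c α := by rw [← map_pow, hβ]
    have chroot : 27 * c α * c (eval ![lam, mu] P) + (c u * c lam + c v * c mu) ^ 3 = 0 := by
      have h := congrArg c hroot
      simpa only [map_add, map_mul, map_pow, map_ofNat, map_zero] using h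
    have hu27 : IsUnit (c (27 * β ^ 6)) := by
      exact IsUnit.map c (Ne.isUnit (mul_ne_zero (by norm_num) (pow_ne_zero _ hβ0)))
    rw [← hu27.mul_right_eq_zero]
    have hc27 : c (27 * β ^ 6) = 27 * c β ^ 6 := by
      rw [map_mul, map_pow, map_ofNat]
    rw [hc27]
    -- rewrite h2 using hx, hy
    rw [hx, hy] at h2
    have hc2 : ∀ r s : k, c (r * s) = c r * c s := fun r s => map_mul c r s
    rw [hc2, hc2] at h2
    have hc3b : c (3 * β ^ 2) = 3 * c β ^ 2 := by rw [map_mul, map_pow, map_ofNat]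
    have hc3a : c (3 * α) = 3 * c α := by rw [map_mul, map_ofNat]
    rw [hc3b, hc3a] at h2
    set A := c α; set B := c β; set U := c u; set V := c v
    set L := c lam; set M := c mu
    set p := c (eval ![lam, mu] P)
    set z := q (X 2); set t := q (X 3)
    linear_combination
      (-(9*B^4*(U*L+V*M)*t*S + (3*B^2*z)^2 + (3*B^2*z)*(B*(U*L+V*M)*S - 3*A*t)
          + (B*(U*L+V*M)*S - 3*A*t)^2)) * h2
      + (27*p*B^3*S^3 + 9*B^2*(U*L+V*M)^2*S^2*t - 27*A*B*(U*L+V*M)*S*t^2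
          + 27*A*t^3*(B^3+A)) * chβ
      + (B^3*S^3) * chroot
  · simp only [eval_sub, eval_add, eval_mul, eval_C, eval_X]
    simp only [Matrix.cons_val_zero, Matrix.cons_val_one, Matrix.head_cons]
    simp
    linear_combination 3 * hβ
  · simp only [eval_add, eval_mul, eval_pow, eval_C, eval_X, eval_rename]
    have : (![(0:k), 0, -β, 1] ∘ fun i : Fin 2 => (i.castLE (by norm_num) : Fin 4))
        = fun _ => 0 := by
      funext i; fin_cases i <;> rfl
    rw [this, heval0]
    simp
    linear_combination -hβ
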